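/- arXiv:1102.1346 — 2 statements merged into one kernel-verified Lean document; each statement's English description precedes it below -/
import Mathlib

section
/- Let K be a field of characteristic zero, L a finite extension of K, and λ_1, ..., λ_m ∈ L nonzero. Fix a polynomial P(y) ∈ K[y] of degree m with roots λ_1,...,λ_m and leading coefficient p, and for each n define R_n = p^{d} Π_{j=1}^m F(λ_j^n) where F ∈ K[y] is a fixed polynomial of degree ≤ d. Then (R_n) takes values in K and satisfies a linear recurrence with constant coefficients in K. -/
open Polynomial List

private theorem exists_comp_perm_eq' {β : Type*} {m : ℕ} {u v : Fin m → β}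
    (h : (List.ofFn u).Perm (List.ofFn v)) : ∃ τ : Equiv.Perm (Fin m), v = u ∘ τ := by
  letI : LinearOrder β := IsWellOrder.linearOrder WellOrderingRel
  have h1 : (List.ofFn (u ∘ Tuple.sort u)).Perm (List.ofFn (v ∘ Tuple.sort v)) :=
    ((Equiv.Perm.ofFn_comp_perm _ u).trans h).trans (Equiv.Perm.ofFn_comp_perm _ v).symm
  have h2 : List.ofFn (u ∘ Tuple.sort u) = List.ofFn (v ∘ Tuple.sort v) :=
    List.Perm.eq_of_sortedLE (Tuple.monotone_sort u).sortedLE_ofFn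
      (Tuple.monotone_sort v).sortedLE_ofFn h1
  rw [List.ofFn_inj] at h2
  refine ⟨(Tuple.sort v).symm.trans (Tuple.sort u), ?_⟩
  funext j
  have := congrFun h2 ((Tuple.sort v).symm j)
  simpa using this.symm

private theorem mem_range_of_fixed' {K N : Type*} [Field K] [Field N] [Algebra K N]
    [FiniteDimensional K N] [IsGalois K N] (x : N)
    (h : ∀ σ : N ≃ₐ[K] N, σ x = x) : ∃ y : K, algebraMap K N y = x := by
  have hx : x ∈ (⊥ : IntermediateField K N) := by
    rw [← IsGalois.fixedField_fixingSubgroup (⊥ : IntermediateField K N)]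
    exact fun g => h g
  rwa [IntermediateField.mem_bot] at hx

/-- let `K` be a field of characteristic zero, `L` a finite extension, and
`P ∈ K[y]` a polynomial of degree `m` with leading coefficient `p` and roots
`λ_1, …, λ_m ∈ L`, all nonzero.  For a fixed `F ∈ K[y]` of degree `≤ d`, the sequence
`R_n = p^d · Π_j F(λ_j^n)` takes values in (the image of) `K` and satisfies a linear
recurrence with constant coefficients in `K`. -/
theorem symmetric_power_product_recurrent
    (K L : Type*) [Field K] [CharZero K] [Field L] [Algebra K L]
    [FiniteDimensional K L]
    (m : ℕ) (l : Fin m → L) (hl : ∀ j, l j ≠ 0)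
    (p : K) (hp : p ≠ 0) (P : K[X]) (hm : P.natDegree = m)
    (hP : P.map (algebraMap K L) =
      Polynomial.C (algebraMap K L p) * ∏ j, (X - Polynomial.C (l j)))
    (d : ℕ) (F : K[X]) (hF : F.natDegree ≤ d)
    (R : ℕ → L)
    (hR : ∀ n : ℕ,
      R n = algebraMap K L p ^ d * ∏ j, (F.map (algebraMap K L)).eval (l j ^ n)) :
    ∃ a : ℕ → K, (∀ n, algebraMap K L (a n) = R n) ∧
      ∃ (e : ℕ) (s : ℕ → K), 0 < e ∧
        ∀ n : ℕ, a (n + e) = ∑ i ∈ Finset.Icc 1 e, s i * a (n + e - i) := by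
  classical
  -- setup: a finite Galois extension N of K containing (a copy of) L
  let A := AlgebraicClosure L
  haveI : Algebra.IsAlgebraic K A := Algebra.IsAlgebraic.trans K L A
  haveI : IsAlgClosure K A := ⟨inferInstance, inferInstance⟩
  let N := IntermediateField.normalClosure K L A
  haveI : IsGalois K N := ⟨⟩
  let φ₀ : L →ₐ[K] A := IsScalarTower.toAlgHom K L A
  have hrange : ∀ x : L, φ₀ x ∈ N := fun x =>
    (le_iSup (fun φ : L →ₐ[K] A => φ.fieldRange) φ₀ : φ₀.fieldRange ≤ N) ⟨x, rfl⟩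
  let ι : L →ₐ[K] ↥N := φ₀.codRestrict N.toSubalgebra hrange
  have hinj : Function.Injective ι := ι.toRingHom.injective
  have hcomp : ι.toRingHom.comp (algebraMap K L) = algebraMap K ↥N :=
    RingHom.ext fun x => ι.commutes x
  set Λ : Fin m → ↥N := fun j => ι (l j) with hΛ
  -- P over N
  have hPN : P.map (algebraMap K ↥N) = C (algebraMap K ↥N p) * ∏ j, (X - C (Λ j)) := by
    have h1 := congrArg (Polynomial.map ι.toRingHom) hP
    rw [Polynomial.map_map, hcomp] at h1
    simpa [Polynomial.map_mul, Polynomial.map_prod, Polynomial.map_sub] using h1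
  have hCne : (C (algebraMap K ↥N p)) ≠ 0 :=
    C_ne_zero.mpr ((map_ne_zero_iff _ (algebraMap K ↥N).injective).mpr hp)
  -- every automorphism permutes the Λ's
  have hperm : ∀ σ : ↥N ≃ₐ[K] ↥N, ∃ τ : Equiv.Perm (Fin m),
      (fun j => σ (Λ j)) = Λ ∘ τ := by
    intro σ
    have h1 := congrArg (Polynomial.map (σ : ↥N →+* ↥N)) hPN
    rw [Polynomial.map_map] at h1
    have hc2 : (σ : ↥N →+* ↥N).comp (algebraMap K ↥N) = algebraMap K ↥N :=
      RingHom.ext fun x => σ.commutes x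
    rw [hc2, hPN] at h1
    have h2 : (∏ j, (X - C (σ (Λ j)))) = ∏ j, (X - C (Λ j)) := by
      apply mul_left_cancel₀ hCne
      rw [h1]
      simp [Polynomial.map_mul, Polynomial.map_prod, Polynomial.map_sub]
    have e1 : ∀ u : Fin m → ↥N,
        (∏ j, (X - C (u j))).roots = Multiset.map u Finset.univ.val := by
      intro u
      rw [Finset.prod_eq_multiset_prod,
        show Multiset.map (fun j => X - C (u j)) Finset.univ.val
          = Multiset.map (fun a => X - C a) (Multiset.map u Finset.univ.val) from
          (Multiset.map_map (fun a => X - C a) u Finset.univ.val).symm]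
      exact roots_multiset_prod_X_sub_C _
    have h3 : Multiset.map (fun j => σ (Λ j)) Finset.univ.val
        = Multiset.map Λ Finset.univ.val := by
      rw [← e1, ← e1, h2]
    rw [Fin.univ_val_map, Fin.univ_val_map, Multiset.coe_eq_coe] at h3
    obtain ⟨τ, hτ⟩ := exists_comp_perm_eq' h3.symm
    exact ⟨τ, hτ⟩
  -- the exponents and generalized power sum data
  let ee : ℕ := (d + 1) ^ m
  have he : 0 < ee := by positivity
  let μ : (Fin m → Fin (d + 1)) → ↥N := fun f => ∏ j, Λ j ^ (f j : ℕ)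
  let b : (Fin m → Fin (d + 1)) → K := fun f => p ^ d * ∏ j, F.coeff (f j)
  have hcard : Fintype.card (Fin m → Fin (d + 1)) = ee := by
    simp [ee, Fintype.card_fun]
  -- expansion of R as a generalized power sum
  have hev : ∀ x : L, ι ((F.map (algebraMap K L)).eval x)
      = (F.map (algebraMap K ↥N)).eval (ι x) := by
    intro x
    rw [Polynomial.eval_map, Polynomial.eval_map, ← hcomp]
    exact Polynomial.hom_eval₂ F (algebraMap K L) ι.toRingHom x
  have hev2 : ∀ y : ↥N, (F.map (algebraMap K ↥N)).eval y
      = ∑ i : Fin (d + 1), algebraMap K ↥N (F.coeff i) * y ^ (i : ℕ) := by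
    intro y
    rw [Polynomial.eval_eq_sum_range'
      (lt_of_le_of_lt Polynomial.natDegree_map_le (Nat.lt_succ_of_le hF)),
      ← Fin.sum_univ_eq_sum_range]
    exact Finset.sum_congr rfl fun i _ => by rw [Polynomial.coeff_map]
  have hRN : ∀ n : ℕ, ι (R n)
      = ∑ f : Fin m → Fin (d + 1), algebraMap K ↥N (b f) * μ f ^ n := by
    intro n
    rw [hR n, map_mul, map_pow, map_prod, ι.commutes]
    have : ∀ j : Fin m, ι ((F.map (algebraMap K L)).eval (l j ^ n))
        = ∑ i : Fin (d + 1), algebraMap K ↥N (F.coeff i) * (Λ j ^ n) ^ (i : ℕ) := by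
      intro j
      rw [hev, map_pow, hev2]
    rw [Finset.prod_congr rfl fun j _ => this j, Fintype.prod_sum, Finset.mul_sum]
    refine Finset.sum_congr rfl fun f _ => ?_
    rw [Finset.prod_mul_distrib]
    have h5 : ∀ j : Fin m, (Λ j ^ n) ^ ((f j : ℕ)) = (Λ j ^ (f j : ℕ)) ^ n :=
      fun j => pow_right_comm _ _ _
    rw [Finset.prod_congr rfl fun j _ => h5 j]
    simp only [b, μ, map_mul, map_pow, map_prod, Finset.prod_pow]
    ring
  -- the characteristic polynomial q
  let q : Polynomial ↥N := ∏ f : Fin m → Fin (d + 1), (X - C (μ f))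
  have hqmonic : q.Monic := monic_prod_of_monic _ _ fun f _ => monic_X_sub_C _
  have hqdeg : q.natDegree = ee := by
    rw [show q = ∏ f : Fin m → Fin (d + 1), (X - C (μ f)) from rfl,
      natDegree_prod_of_monic _ _ fun f _ => monic_X_sub_C _]
    simp [natDegree_X_sub_C, hcard]
  -- action of automorphisms on μ and invariance
  have hσμ : ∀ (σ : ↥N ≃ₐ[K] ↥N) (τ : Equiv.Perm (Fin m)),
      ((fun j => σ (Λ j)) = Λ ∘ τ) → ∀ f, σ (μ f)
        = μ (f ∘ τ.symm) := by
    intro σ τ hτ f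
    show σ (∏ j, Λ j ^ (f j : ℕ)) = ∏ j, Λ j ^ ((f (τ.symm j)) : ℕ)
    rw [map_prod]
    have h1 : ∀ j, σ (Λ j ^ (f j : ℕ)) = Λ (τ j) ^ (f j : ℕ) := by
      intro j
      rw [map_pow, congrFun hτ j]
      rfl
    rw [Finset.prod_congr rfl fun j _ => h1 j]
    exact Fintype.prod_equiv τ _ _ fun j => by simp
  have hbperm : ∀ (τ : Equiv.Perm (Fin m)) (f : Fin m → Fin (d + 1)),
      b (f ∘ τ.symm) = b f := by
    intro τ f
    show p ^ d * ∏ j, F.coeff (f (τ.symm j)) = p ^ d * ∏ j, F.coeff (f j)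
    congr 1
    exact Equiv.prod_comp τ.symm fun j => F.coeff (f j)
  -- the Galois group fixes ι (R n)
  have hfixR : ∀ n (σ : ↥N ≃ₐ[K] ↥N), σ (ι (R n)) = ι (R n) := by
    intro n σ
    obtain ⟨τ, hτ⟩ := hperm σ
    rw [hRN n, map_sum]
    refine Fintype.sum_equiv (Equiv.arrowCongr τ (Equiv.refl (Fin (d + 1)))) _ _
      fun f => ?_
    rw [map_mul, map_pow, σ.commutes, hσμ σ τ hτ f]
    have harr : (Equiv.arrowCongr τ (Equiv.refl (Fin (d + 1)))) f = f ∘ τ.symm := by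
      funext j; simp [Equiv.arrowCongr]
    rw [harr, hbperm τ f]
  -- the Galois group fixes the coefficients of q
  have hfixq : ∀ (k : ℕ) (σ : ↥N ≃ₐ[K] ↥N), σ (q.coeff k) = q.coeff k := by
    intro k σ
    obtain ⟨τ, hτ⟩ := hperm σ
    have hmap : q.map (σ : ↥N →+* ↥N) = q := by
      show Polynomial.map (σ : ↥N →+* ↥N) (∏ f : Fin m → Fin (d + 1), (X - C (μ f)))
        = ∏ f : Fin m → Fin (d + 1), (X - C (μ f))
      rw [Polynomial.map_prod]
      simp only [Polynomial.map_sub, map_X, map_C]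
      refine Fintype.prod_equiv (Equiv.arrowCongr τ (Equiv.refl (Fin (d + 1)))) _ _
        fun f => ?_
      have harr : (Equiv.arrowCongr τ (Equiv.refl (Fin (d + 1)))) f = f ∘ τ.symm := by
        funext j; simp [Equiv.arrowCongr]
      rw [show ((σ : ↥N →+* ↥N) (μ f)) = σ (μ f) from rfl, hσμ σ τ hτ f, harr]
    have := congrArg (fun r => r.coeff k) hmap
    simpa [Polynomial.coeff_map] using this
  -- roots of q give the recurrence for powers of μ
  have hμe : ∀ f, μ f ^ ee
      = ∑ i ∈ Finset.Icc 1 ee, (- q.coeff (ee - i)) * μ f ^ (ee - i) := by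
    intro f
    have hroot : q.eval (μ f) = 0 := by
      rw [show q = ∏ g : Fin m → Fin (d + 1), (X - C (μ g)) from rfl, eval_prod]
      exact Finset.prod_eq_zero (Finset.mem_univ f) (by simp)
    have hevq : q.eval (μ f) = ∑ k ∈ Finset.range (ee + 1), q.coeff k * μ f ^ k :=
      Polynomial.eval_eq_sum_range' (by rw [hqdeg]; exact Nat.lt_succ_self _) _
    rw [Finset.sum_range_succ, ← hqdeg, hqmonic.coeff_natDegree, one_mul, hqdeg,
      hroot] at hevq
    have h0 : μ f ^ ee = ∑ k ∈ Finset.range ee, -(q.coeff k * μ f ^ k) := by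
      rw [Finset.sum_neg_distrib]
      exact eq_neg_of_add_eq_zero_right hevq.symm
    rw [h0]
    refine Finset.sum_nbij' (fun k => ee - k) (fun i => ee - i) ?_ ?_ ?_ ?_ ?_
    · intro k hk
      simp only [Finset.mem_range] at hk
      simp only [Finset.mem_Icc]
      omega
    · intro i hi
      simp only [Finset.mem_Icc] at hi
      simp only [Finset.mem_range]
      omega
    · intro k hk
      simp only [Finset.mem_range] at hk
      show ee - (ee - k) = k
      omega
    · intro i hi
      simp only [Finset.mem_Icc] at hi
      show ee - (ee - i) = i
      omega
    · intro k hk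
      simp only [Finset.mem_range] at hk
      rw [show ee - (ee - k) = k by omega]
      ring
  -- the recurrence for ι ∘ R
  have hRrec : ∀ n : ℕ, ι (R (n + ee))
      = ∑ i ∈ Finset.Icc 1 ee, (- q.coeff (ee - i)) * ι (R (n + ee - i)) := by
    intro n
    rw [hRN (n + ee)]
    have hterm : ∀ f : Fin m → Fin (d + 1),
        algebraMap K ↥N (b f) * μ f ^ (n + ee)
        = ∑ i ∈ Finset.Icc 1 ee,
            (- q.coeff (ee - i)) * (algebraMap K ↥N (b f) * μ f ^ (n + ee - i)) := by
      intro f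
      rw [pow_add, show μ f ^ ee = ∑ i ∈ Finset.Icc 1 ee,
        (- q.coeff (ee - i)) * μ f ^ (ee - i) from hμe f, Finset.mul_sum, Finset.mul_sum]
      refine Finset.sum_congr rfl fun i hi => ?_
      simp only [Finset.mem_Icc] at hi
      rw [show n + ee - i = n + (ee - i) by omega, pow_add]
      ring
    rw [Finset.sum_congr rfl fun f _ => hterm f, Finset.sum_comm]
    refine Finset.sum_congr rfl fun i _ => ?_
    rw [hRN (n + ee - i), Finset.mul_sum]
  -- pull everything down to K
  have haK : ∀ n, ∃ y : K, algebraMap K L y = R n := by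
    intro n
    obtain ⟨y, hy⟩ := mem_range_of_fixed' (ι (R n)) (hfixR n)
    refine ⟨y, hinj ?_⟩
    rw [show ι (algebraMap K L y) = algebraMap K ↥N y from ι.commutes y, hy]
  choose a ha using haK
  have hsK : ∀ i : ℕ, ∃ y : K, algebraMap K ↥N y = - q.coeff (ee - i) := by
    intro i
    exact mem_range_of_fixed' _ fun σ => by rw [map_neg, hfixq]
  choose s hs using hsK
  refine ⟨a, ha, ee, s, he, ?_⟩
  intro n
  apply (algebraMap K ↥N).injective
  have key : ∀ k, algebraMap K ↥N (a k) = ι (R k) := by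
    intro k
    rw [← ι.commutes (a k), ha k]
  rw [key, map_sum, hRrec n]
  refine Finset.sum_congr rfl fun i _ => ?_
  rw [map_mul, hs i, key]
end

section
/- Let p(z, x) = Σ_{(α,β)} c_{α,β} x^α z^β be a nonzero polynomial in z with Laurent-polynomial coefficients in r variables x = (x_1,...,x_r), and let λ(x) be a root of p (an algebraic function of x). For a weight vector ω ∈ ℚ^r, let V(ω) = v*(λ(ε_ω(x))) denote the valuation (lowest exponent in t) of λ after substituting x_i = t^{ω_i}. Then for each generic ω, the minimum min_{(α,β)} { α·ω + β V(ω) } over the support of p is attained at least twice; consequently, ω ↦ V(ω) is piecewise linear: there is a fan in ℝ^r such that V is linear on the interior of each maximal cone. -/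
/-- tropicalization of an algebraic equation: let
`p(z,x) = Σ_{(α,β) ∈ S} c_{α,β} x^α z^β` and let `λ(ω)` be, for each generic weight
`ω ∈ ℚ^r` (generic: `ω` separates the distinct exponents `α` occurring in `S`), a
nonzero Puiseux series in `t` which is a root of `p` after the substitution
`x_i = t^{ω_i}`.  Write `V(ω)` for the valuation (lowest exponent) of `λ(ω)`.  Then for
each generic `ω` the minimum `min_{(α,β) ∈ S} (α·ω + β V(ω))` is attained at least
twice; consequently `V` is piecewise linear on generic weights, taking values among
finitely many rational linear functions of `ω`. -/
theorem tropical_root_valuation_piecewise_linear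
    (F : Type*) [Field F] [CharZero F] (r : ℕ)
    (S : Finset ((Fin r → ℤ) × ℕ)) (hS : S.Nonempty)
    (c : ((Fin r → ℤ) × ℕ) → F) (hc : ∀ p ∈ S, c p ≠ 0)
    (Generic : (Fin r → ℚ) → Prop)
    (hGen : ∀ ω, Generic ω ↔
      ∀ a b : Fin r → ℤ, (∃ β, (a, β) ∈ S) → (∃ β, (b, β) ∈ S) → a ≠ b →
        (∑ i, (a i : ℚ) * ω i) ≠ ∑ i, (b i : ℚ) * ω i)
    (lam : (Fin r → ℚ) → HahnSeries ℚ F)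
    (hroot : ∀ ω, Generic ω → lam ω ≠ 0 ∧
      ∑ p ∈ S,
        HahnSeries.single (∑ i, (p.1 i : ℚ) * ω i) (c p) * lam ω ^ p.2 = 0)
    (V : (Fin r → ℚ) → ℚ) (hV : ∀ ω, V ω = (lam ω).order) :
    (∀ ω, Generic ω → ∃ p ∈ S, ∃ q ∈ S, p ≠ q ∧
      ((∑ i, (p.1 i : ℚ) * ω i) + p.2 * V ω =
        (∑ i, (q.1 i : ℚ) * ω i) + q.2 * V ω) ∧
      ∀ s ∈ S, (∑ i, (p.1 i : ℚ) * ω i) + p.2 * V ω ≤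
        (∑ i, (s.1 i : ℚ) * ω i) + s.2 * V ω) ∧
    ∃ W : Finset (Fin r → ℚ), ∀ ω, Generic ω →
      ∃ w ∈ W, V ω = ∑ i, w i * ω i := by
  have key : ∀ ω, Generic ω → ∃ p ∈ S, ∃ q ∈ S, p ≠ q ∧
      ((∑ i, (p.1 i : ℚ) * ω i) + p.2 * V ω =
        (∑ i, (q.1 i : ℚ) * ω i) + q.2 * V ω) ∧
      ∀ s ∈ S, (∑ i, (p.1 i : ℚ) * ω i) + p.2 * V ω ≤
        (∑ i, (s.1 i : ℚ) * ω i) + s.2 * V ω := by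
    intro ω hω
    obtain ⟨hL, hsum⟩ := hroot ω hω
    set L := lam ω with hLdef
    set f : ((Fin r → ℤ) × ℕ) → ℚ :=
      fun p => (∑ i, (p.1 i : ℚ) * ω i) + p.2 * V ω with hf
    set term : ((Fin r → ℤ) × ℕ) → HahnSeries ℚ F :=
      fun p => HahnSeries.single (∑ i, (p.1 i : ℚ) * ω i) (c p) * L ^ p.2 with hterm
    have htne : ∀ p ∈ S, term p ≠ 0 := fun p hp =>
      mul_ne_zero (HahnSeries.single_ne_zero (hc p hp)) (pow_ne_zero _ hL)
    have horder : ∀ p ∈ S, (term p).order = f p := by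
      intro p hp
      rw [hterm]
      rw [HahnSeries.order_mul (HahnSeries.single_ne_zero (hc p hp)) (pow_ne_zero _ hL),
        HahnSeries.order_single (hc p hp), HahnSeries.order_pow, hf, hV, nsmul_eq_mul]
    obtain ⟨p₀, hp₀S, hp₀min⟩ := S.exists_min_image f hS
    have hq : ∃ q ∈ S, q ≠ p₀ ∧ f q = f p₀ := by
      by_contra h
      push_neg at h
      have hlt : ∀ q ∈ S, q ≠ p₀ → f p₀ < f q := by
        intro q hq hne
        exact lt_of_le_of_ne (hp₀min q hq) (fun e => h q hq hne (e.symm))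
      have h0 : ∑ p ∈ S, (term p).coeff (f p₀) = 0 := by
        have := (map_sum (HahnSeries.coeff.addMonoidHom (f p₀)) term S).symm
        simpa only [HahnSeries.coeff.addMonoidHom, AddMonoidHom.coe_mk, ZeroHom.coe_mk,
          hsum, HahnSeries.coeff_zero] using this
      rw [Finset.sum_eq_single p₀ (fun q hqS hne =>
        HahnSeries.coeff_eq_zero_of_lt_order (by rw [horder q hqS]; exact hlt q hqS hne))
        (fun h' => absurd hp₀S h')] at h0
      have : (term p₀).coeff (f p₀) ≠ 0 := by
        rw [← horder p₀ hp₀S]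
        exact HahnSeries.coeff_order_eq_zero.not.mpr (htne p₀ hp₀S)
      exact this h0
    obtain ⟨q, hqS, hqne, hqeq⟩ := hq
    exact ⟨p₀, hp₀S, q, hqS, Ne.symm hqne, hqeq.symm, fun s hs => hp₀min s hs⟩
  refine ⟨key, ?_⟩
  refine ⟨(S ×ˢ S).image (fun pq => fun i =>
    ((pq.2.1 i : ℚ) - (pq.1.1 i : ℚ)) / ((pq.1.2 : ℚ) - (pq.2.2 : ℚ))), ?_⟩
  intro ω hω
  obtain ⟨p, hpS, q, hqS, hne, heq, -⟩ := key ω hω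
  have hβ : (p.2 : ℚ) ≠ (q.2 : ℚ) := by
    intro hb
    have hb' : p.2 = q.2 := Nat.cast_injective hb
    have hα : p.1 = q.1 := by
      by_contra hα
      have := (hGen ω).mp hω p.1 q.1 ⟨p.2, by simpa using hpS⟩ ⟨q.2, by simpa using hqS⟩ hα
      apply this
      have : (p.2 : ℚ) * V ω = (q.2 : ℚ) * V ω := by rw [hb]
      linarith [heq]
    exact hne (Prod.ext hα hb')
  refine ⟨_, Finset.mem_image.mpr ⟨(p, q), Finset.mem_product.mpr ⟨hpS, hqS⟩, rfl⟩, ?_⟩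
  have hd : ((p.2 : ℚ) - (q.2 : ℚ)) ≠ 0 := sub_ne_zero.mpr hβ
  have : ∑ i, (((q.1 i : ℚ) - (p.1 i : ℚ)) / ((p.2 : ℚ) - (q.2 : ℚ))) * ω i
      = ((∑ i, (q.1 i : ℚ) * ω i) - ∑ i, (p.1 i : ℚ) * ω i) / ((p.2 : ℚ) - (q.2 : ℚ)) := by
    rw [← Finset.sum_sub_distrib, Finset.sum_div]
    exact Finset.sum_congr rfl (fun i _ => by ring)
  rw [this]
  field_simp
  linarith [heq]
end
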